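/- Assume k(c) > 0 for all c ∈ [0,1]. Then F is a classical solution of the Hamilton–Jacobi–Bellman equation: for all (x, c) ∈ ℝ × [0,1], F_c(x, c) ≥ −x and (1/2)σ² F_{xx}(x, c) + θ(μ − x) F_x(x, c) − λ F(x, c) ≥ −λ x Φ(c); moreover F_c(x, c) = −x whenever x ≤ β*(c), and (1/2)σ² F_{xx}(x, c) + θ(μ − x) F_x(x, c) − λ F(x, c) = −λ x Φ(c) whenever x ≥ β*(c). In particular, max{ λF − (1/2)σ²F_{xx} − θ(μ − x)F_x − λxΦ(c), −F_c − x } = 0 at every point of ℝ × [0,1]. -/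

import Mathlib

open MeasureTheory Real Set Filter

/-- The (positive multiple of the) strictly decreasing fundamental solution `φ_λ` of the
Ornstein–Uhlenbeck equation `(1/2)σ² f'' + θ(μ - x) f' = λ f`, written as the integral
`φ(x) = ∫₀^∞ t^(λ/θ - 1) exp(-t²/2 - a t (x - μ)) dt` with `a = √(2θ)/σ`. -/
noncomputable def OUphi (lam th mu sig : ℝ) (x : ℝ) : ℝ :=
  ∫ t in Set.Ioi (0:ℝ),
    t ^ (lam / th - 1) * Real.exp (-t ^ 2 / 2 - Real.sqrt (2 * th) / sig * t * (x - mu))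

/-- `k(c) = λ + θ + λ Φ'(c)`. -/
noncomputable def kfun (lam th : ℝ) (Phi : ℝ → ℝ) (c : ℝ) : ℝ :=
  lam + th + lam * deriv Phi c

/-- `G(x; c) = μ(k(c) - θ)/λ + k(c)(x - μ)/(λ + θ)`. -/
noncomputable def Gfun (lam th mu : ℝ) (Phi : ℝ → ℝ) (x c : ℝ) : ℝ :=
  mu * (kfun lam th Phi c - th) / lam + kfun lam th Phi c * (x - mu) / (lam + th)

/-- `x₀(c) = -θμΦ'(c)/k(c)`. -/
noncomputable def x0fun (lam th mu : ℝ) (Phi : ℝ → ℝ) (c : ℝ) : ℝ :=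
  -(th * mu * deriv Phi c) / kfun lam th Phi c

/-- The smooth-fit function `H(x;c) = (k(c)/(λ+θ)) φ(x) - G(x;c) φ'(x)`. -/
noncomputable def Hfun (lam th mu sig : ℝ) (Phi : ℝ → ℝ) (x c : ℝ) : ℝ :=
  kfun lam th Phi c / (lam + th) * OUphi lam th mu sig x
    - Gfun lam th mu Phi x c * deriv (OUphi lam th mu sig) x

/-- The candidate value function of the optimal stopping problem:
`u(x;c) = G(x;c) - (G(β;c)/φ(β)) φ(x)` for `x > β` and `u(x;c) = 0` for `x ≤ β`. -/
noncomputable def ufun (lam th mu sig : ℝ) (Phi : ℝ → ℝ) (b : ℝ) (x c : ℝ) : ℝ :=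
  if b < x then
    Gfun lam th mu Phi x c
      - Gfun lam th mu Phi b c / OUphi lam th mu sig b * OUphi lam th mu sig x
  else 0

/-- The candidate value function of the control problem:
`F(x,c) = x(1-c) - ∫_c^1 u(x;y) dy`, where `u(·;y)` uses the boundary `β(y)`. -/
noncomputable def Ffun (lam th mu sig : ℝ) (Phi : ℝ → ℝ) (beta : ℝ → ℝ) (x c : ℝ) : ℝ :=
  x * (1 - c) - ∫ y in c..(1:ℝ), ufun lam th mu sig Phi (beta y) x y

namespace OUaux

open Metric Topology Asymptotics

theorem expMeas (b : ℝ) : Measurable (fun t : ℝ => Real.exp (-t ^ 2 / 2 + b * t)) :=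
  (((measurable_id.pow_const 2).neg.div_const 2).add ((measurable_id.const_mul b))).exp

theorem intOn (p b : ℝ) (hp : -1 < p) :
    IntegrableOn (fun t : ℝ => t ^ p * Real.exp (-t ^ 2 / 2 + b * t)) (Set.Ioi 0) := by
  have base : IntegrableOn (fun t : ℝ => t ^ p * Real.exp (-(1/4 : ℝ) * t ^ 2)) (Set.Ioi 0) :=
    integrableOn_rpow_mul_exp_neg_mul_sq (by norm_num) hp
  refine ((base.const_mul (Real.exp (b ^ 2))).mono ?_ ?_)
  · exact ((measurable_id'.pow_const p).mul (expMeas b)).aestronglyMeasurable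
  · filter_upwards [ae_restrict_mem measurableSet_Ioi] with t ht
    have h0 : (0:ℝ) < t := ht
    have hng : (0:ℝ) ≤ t ^ p := Real.rpow_nonneg h0.le p
    rw [Real.norm_eq_abs, Real.norm_eq_abs, abs_mul,
      abs_of_nonneg (Real.exp_pos _).le, abs_of_nonneg hng,
      abs_of_nonneg (by positivity : (0:ℝ) ≤ Real.exp (b^2) * (t ^ p * Real.exp (-(1/4:ℝ) * t^2)))]
    have key : -t ^ 2 / 2 + b * t ≤ b ^ 2 + -(1/4:ℝ) * t ^ 2 := by nlinarith [sq_nonneg (t/2 - b)]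
    calc t ^ p * Real.exp (-t ^ 2 / 2 + b * t)
        ≤ t ^ p * Real.exp (b ^ 2 + -(1/4:ℝ) * t ^ 2) :=
          mul_le_mul_of_nonneg_left (Real.exp_le_exp.2 key) hng
      _ = Real.exp (b^2) * (t ^ p * Real.exp (-(1/4:ℝ) * t ^ 2)) := by
          rw [Real.exp_add]; ring

noncomputable def psi (p a mu : ℝ) (x : ℝ) : ℝ :=
  ∫ t in Set.Ioi (0:ℝ), t ^ p * Real.exp (-t ^ 2 / 2 - a * t * (x - mu))

theorem psi_integrand_meas (p a mu x : ℝ) :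
    Measurable (fun t : ℝ => t ^ p * Real.exp (-t ^ 2 / 2 - a * t * (x - mu))) := by
  apply (measurable_id'.pow_const p).mul
  exact (((measurable_id.pow_const 2).neg.div_const 2).sub
    ((measurable_id.const_mul a).mul_const (x - mu))).exp

theorem psi_integrableOn (p a mu x : ℝ) (hp : -1 < p) :
    IntegrableOn (fun t : ℝ => t ^ p * Real.exp (-t ^ 2 / 2 - a * t * (x - mu)))
      (Set.Ioi 0) := by
  have := intOn p (-a * (x - mu)) hp
  refine this.congr_fun (fun t ht => ?_) measurableSet_Ioi
  ring_nf

theorem psi_pos (p a mu x : ℝ) (hp : -1 < p) : 0 < psi p a mu x := by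
  rw [psi, MeasureTheory.setIntegral_pos_iff_support_of_nonneg_ae]
  · have hsub : (Set.Ioi (0:ℝ)) ⊆ (Function.support fun t => t ^ p * Real.exp (-t ^ 2 / 2 - a * t * (x - mu))) ∩ Set.Ioi 0 := by
      intro t ht
      have h0 : (0:ℝ) < t := ht
      have : 0 < t ^ p * Real.exp (-t ^ 2 / 2 - a * t * (x - mu)) := by positivity
      exact ⟨ne_of_gt this, ht⟩
    calc (0:ENNReal) < volume (Set.Ioi (0:ℝ)) := by simp
      _ ≤ _ := measure_mono hsub
  · filter_upwards [ae_restrict_mem measurableSet_Ioi] with t ht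
    have h0 : (0:ℝ) < t := ht
    positivity
  · exact (psi_integrableOn p a mu x hp)

theorem psi_hasDerivAt (p a mu : ℝ) (hp : -1 < p) (ha : 0 ≤ a) (x₀ : ℝ) :
    HasDerivAt (psi p a mu) (-a * psi (p + 1) a mu x₀) x₀ := by
  set bound : ℝ → ℝ := fun t => a * (t ^ (p+1) * Real.exp (-t ^ 2 / 2 + (a * (|x₀ - mu| + 1)) * t))
    with hbdef
  have key := hasDerivAt_integral_of_dominated_loc_of_deriv_le (μ := volume.restrict (Set.Ioi 0))
    (F := fun x t => t ^ p * Real.exp (-t ^ 2 / 2 - a * t * (x - mu)))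
    (F' := fun x t => -a * (t ^ (p+1) * Real.exp (-t ^ 2 / 2 - a * t * (x - mu))))
    (x₀ := x₀) (bound := bound) (ball_mem_nhds x₀ one_pos)
    ?meas ?int ?meas' ?bdd ?bint ?diff
  case meas =>
    exact Eventually.of_forall fun x => (psi_integrand_meas p a mu x).aestronglyMeasurable
  case int => exact psi_integrableOn p a mu x₀ hp
  case meas' =>
    apply Measurable.aestronglyMeasurable
    exact (psi_integrand_meas (p+1) a mu x₀).const_mul (-a)
  case bdd =>
    filter_upwards [ae_restrict_mem measurableSet_Ioi] with t ht x hx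
    have h0 : (0:ℝ) < t := ht
    have h1 : |x - mu| ≤ |x₀ - mu| + 1 := by
      have := mem_ball_iff_norm.mp hx
      rw [Real.norm_eq_abs] at this
      calc |x - mu| = |(x - x₀) + (x₀ - mu)| := by ring_nf
        _ ≤ |x - x₀| + |x₀ - mu| := abs_add_le _ _
        _ ≤ |x₀ - mu| + 1 := by linarith
    have h2 : -a * t * (x - mu) ≤ (a * (|x₀ - mu| + 1)) * t := by
      calc -a * t * (x - mu) ≤ |(-a) * t * (x - mu)| := le_abs_self _
        _ = a * t * |x - mu| := by
            rw [abs_mul, abs_mul, abs_neg, abs_of_nonneg ha, abs_of_nonneg h0.le]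
        _ ≤ a * t * (|x₀ - mu| + 1) := by
            apply mul_le_mul_of_nonneg_left h1 (by positivity)
        _ = (a * (|x₀ - mu| + 1)) * t := by ring
    rw [Real.norm_eq_abs, abs_mul, abs_mul, abs_neg, abs_of_nonneg ha,
      abs_of_nonneg (Real.rpow_nonneg h0.le _), abs_of_nonneg (Real.exp_pos _).le, hbdef]
    have : Real.exp (-t ^ 2 / 2 - a * t * (x - mu)) ≤
        Real.exp (-t ^ 2 / 2 + (a * (|x₀ - mu| + 1)) * t) := by
      apply Real.exp_le_exp.2; linarith
    calc a * (t ^ (p+1) * Real.exp (-t ^ 2 / 2 - a * t * (x - mu)))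
        ≤ a * (t ^ (p+1) * Real.exp (-t ^ 2 / 2 + (a * (|x₀ - mu| + 1)) * t)) := by
          apply mul_le_mul_of_nonneg_left _ ha
          exact mul_le_mul_of_nonneg_left this (Real.rpow_nonneg h0.le _)
      _ = _ := rfl
  case bint =>
    exact ((intOn (p+1) _ (by linarith)).const_mul a)
  case diff =>
    filter_upwards [ae_restrict_mem measurableSet_Ioi] with t ht x hx
    have h0 : (0:ℝ) < t := ht
    have : HasDerivAt (fun x : ℝ => -t ^ 2 / 2 - a * t * (x - mu)) (-(a*t)) x := by
      simpa using (((hasDerivAt_id x).sub_const mu).const_mul (a*t)).const_sub (-t^2/2)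
    have hder := ((this.exp).const_mul (t ^ p))
    refine hder.congr_deriv ?_
    rw [Real.rpow_add h0, Real.rpow_one]
    ring
  rcases key with ⟨_, hd⟩
  have : (∫ t in Set.Ioi (0:ℝ), -a * (t ^ (p+1) * Real.exp (-t ^ 2 / 2 - a * t * (x₀ - mu))))
      = -a * psi (p+1) a mu x₀ := by
    rw [psi, MeasureTheory.integral_const_mul]
  rw [← this]
  exact hd

theorem psi_ode (p a mu x : ℝ) (hp : -1 < p) :
    psi (p+2) a mu x + a * (x - mu) * psi (p+1) a mu x - (p+1) * psi p a mu x = 0 := by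
  set b : ℝ := -a * (x - mu) with hb
  set g : ℝ → ℝ := fun t => t ^ (p+1) * Real.exp (-t ^ 2 / 2 - a * t * (x - mu)) with hg
  set g' : ℝ → ℝ := fun t =>
    (p+1) * (t ^ p * Real.exp (-t ^ 2 / 2 - a * t * (x - mu)))
    - (t ^ (p+2) * Real.exp (-t ^ 2 / 2 - a * t * (x - mu)))
    - a * (x - mu) * (t ^ (p+1) * Real.exp (-t ^ 2 / 2 - a * t * (x - mu))) with hg'
  have i1 := (psi_integrableOn p a mu x hp).const_mul (p+1)
  have i2 := psi_integrableOn (p+2) a mu x (by linarith)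
  have i3 := (psi_integrableOn (p+1) a mu x (by linarith)).const_mul (a * (x-mu))
  have hderiv : ∀ t ∈ Set.Ioi (0:ℝ), HasDerivAt g (g' t) t := by
    intro t ht
    have h0 : (0:ℝ) < t := ht
    have h1 : HasDerivAt (fun s : ℝ => s ^ (p+1)) ((p+1) * t ^ p) t := by
      simpa using Real.hasDerivAt_rpow_const (x := t) (p := p+1) (Or.inl h0.ne')
    have h2 : HasDerivAt (fun s : ℝ => -s ^ 2 / 2 - a * s * (x - mu)) (-t - a * (x-mu)) t := by
      have := (((hasDerivAt_id t).pow 2).neg.div_const 2).sub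
        (((hasDerivAt_id t).const_mul a).mul_const (x - mu))
      refine this.congr_deriv ?_
      simp only [id]; ring
    have := h1.mul h2.exp
    refine this.congr_deriv ?_
    symm
    beta_reduce
    rw [hg']
    have e1 : t ^ (p+2) = t ^ (p+1) * t := by
      rw [← Real.rpow_add_one h0.ne' (p+1)]; ring_nf
    have e2 : t ^ (p+1) = t ^ p * t := by
      rw [← Real.rpow_add_one h0.ne' p]
    beta_reduce
    rw [e1, e2]; ring
  have hcont : ContinuousWithinAt g (Set.Ici 0) 0 := by
    apply ContinuousWithinAt.mul
    · exact (Real.continuousAt_rpow_const 0 (p+1) (Or.inr (by linarith))).continuousWithinAt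
    · apply Continuous.continuousWithinAt; continuity
  have hint : IntegrableOn g' (Set.Ioi 0) := (i1.sub i2).sub i3
  have htend : Tendsto g atTop (𝓝 0) := by
    have hmaj : Tendsto (fun t : ℝ => t ^ (p+1) * Real.exp (-1 * t)) atTop (𝓝 0) :=
      tendsto_rpow_mul_exp_neg_mul_atTop_nhds_zero (p+1) 1 one_pos
    apply squeeze_zero' (g := fun t : ℝ => t ^ (p+1) * Real.exp (-1 * t))
    · filter_upwards [eventually_ge_atTop (0:ℝ)] with t ht
      have : (0:ℝ) ≤ t ^ (p+1) := Real.rpow_nonneg ht _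
      positivity
    · filter_upwards [eventually_ge_atTop (max 0 (2 * (b + 1)))] with t ht
      have ht0 : (0:ℝ) ≤ t := le_trans (le_max_left _ _) ht
      have htb : 2 * (b+1) ≤ t := le_trans (le_max_right _ _) ht
      have hexp : -t ^ 2 / 2 - a * t * (x - mu) ≤ -1 * t := by
        have h' : -t^2/2 + b * t ≤ -1 * t := by nlinarith
        calc -t ^ 2 / 2 - a * t * (x - mu) = -t^2/2 + b * t := by rw [hb]; ring
          _ ≤ -1 * t := h'
      exact mul_le_mul_of_nonneg_left (Real.exp_le_exp.2 hexp) (Real.rpow_nonneg ht0 _)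
    · exact hmaj
  have key := MeasureTheory.integral_Ioi_of_hasDerivAt_of_tendsto hcont hderiv hint htend
  have hg0 : g 0 = 0 := by
    rw [hg]; simp [Real.zero_rpow (by linarith : p + 1 ≠ 0)]
  rw [hg0, sub_zero] at key
  have expand : ∫ t in Set.Ioi (0:ℝ), g' t
      = (p+1) * psi p a mu x - psi (p+2) a mu x - a * (x-mu) * psi (p+1) a mu x := by
    have i12 : IntegrableOn (fun t : ℝ =>
        (p+1) * (t ^ p * Real.exp (-t ^ 2 / 2 - a * t * (x - mu)))
        - (t ^ (p+2) * Real.exp (-t ^ 2 / 2 - a * t * (x - mu)))) (Set.Ioi 0) := i1.sub i2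
    rw [hg', MeasureTheory.integral_sub i12 i3, MeasureTheory.integral_sub i1 i2,
      MeasureTheory.integral_const_mul, MeasureTheory.integral_const_mul]
    rfl
  rw [expand] at key
  linarith

noncomputable def PP (lam th : ℝ) : ℝ := lam / th - 1
noncomputable def AA (th sig : ℝ) : ℝ := Real.sqrt (2 * th) / sig
noncomputable def phi1 (lam th mu sig : ℝ) (x : ℝ) : ℝ :=
  -(AA th sig) * psi (PP lam th + 1) (AA th sig) mu x
noncomputable def phi2 (lam th mu sig : ℝ) (x : ℝ) : ℝ :=
  (AA th sig)^2 * psi (PP lam th + 2) (AA th sig) mu x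

section OU
variable {lam th mu sig : ℝ} (hlam : 0 < lam) (hth : 0 < th) (hsig : 0 < sig)

theorem phi_eq_psi : OUphi lam th mu sig = psi (PP lam th) (AA th sig) mu := rfl

include hlam hth in
theorem hPP : (-1:ℝ) < PP lam th := by
  have : 0 < lam / th := div_pos hlam hth
  simp only [PP]; linarith

include hth hsig in
theorem hAA : 0 < AA th sig := by
  apply div_pos (Real.sqrt_pos.2 (by linarith)) hsig

include hlam hth in
theorem phi_pos (x : ℝ) : 0 < OUphi lam th mu sig x := by
  rw [phi_eq_psi]; exact psi_pos _ _ _ _ (hPP hlam hth)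

include hlam hth hsig in
theorem phi_hasDerivAt (x : ℝ) :
    HasDerivAt (OUphi lam th mu sig) (phi1 lam th mu sig x) x := by
  rw [phi_eq_psi]
  exact psi_hasDerivAt _ _ _ (hPP hlam hth) (hAA hth hsig).le x

include hlam hth hsig in
theorem phi_deriv_eq : deriv (OUphi lam th mu sig) = phi1 lam th mu sig := by
  funext x; exact (phi_hasDerivAt hlam hth hsig x).deriv

include hlam hth hsig in
theorem phi1_neg (x : ℝ) : phi1 lam th mu sig x < 0 := by
  rw [phi1]
  have h1 := psi_pos (PP lam th + 1) (AA th sig) mu x (by have := hPP hlam hth; linarith)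
  have h2 := hAA hth hsig
  nlinarith

include hlam hth hsig in
theorem phi1_hasDerivAt (x : ℝ) :
    HasDerivAt (phi1 lam th mu sig) (phi2 lam th mu sig x) x := by
  have h := (psi_hasDerivAt (PP lam th + 1) (AA th sig) mu
    (by have := hPP hlam hth; linarith) (hAA hth hsig).le x).const_mul (-(AA th sig))
  refine h.congr_deriv ?_
  rw [phi2]; ring_nf

include hlam hth hsig in
theorem phi2_pos (x : ℝ) : 0 < phi2 lam th mu sig x := by
  rw [phi2]
  have h1 := psi_pos (PP lam th + 2) (AA th sig) mu x (by have := hPP hlam hth; linarith)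
  have h2 := hAA hth hsig
  positivity

include hlam hth hsig in
theorem phi_ode (x : ℝ) :
    1/2 * sig^2 * phi2 lam th mu sig x + th * (mu - x) * phi1 lam th mu sig x
      - lam * OUphi lam th mu sig x = 0 := by
  have hode := psi_ode (PP lam th) (AA th sig) mu x (hPP hlam hth)
  have ha2 : (AA th sig)^2 = 2 * th / sig^2 := by
    rw [AA, div_pow, Real.sq_sqrt (by linarith : (0:ℝ) ≤ 2*th)]
  have hnu : lam = th * (PP lam th + 1) := by
    rw [PP]; field_simp; ring
  rw [phi_eq_psi, phi1, phi2, ha2]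
  have hs2 : sig^2 ≠ 0 := by positivity
  set A := psi (PP lam th) (AA th sig) mu x
  set B := psi (PP lam th + 1) (AA th sig) mu x
  set C := psi (PP lam th + 2) (AA th sig) mu x
  have expand : 1/2 * sig^2 * (2*th/sig^2 * C) = th * C := by field_simp
  rw [expand]
  linear_combination th * hode - A * hnu

include hlam hth hsig in
theorem phi_cont : Continuous (OUphi lam th mu sig) := by
  rw [continuous_iff_continuousAt]
  exact fun x => (phi_hasDerivAt hlam hth hsig x).differentiableAt.continuousAt

include hlam hth hsig in
theorem phi1_cont : Continuous (phi1 lam th mu sig) := by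
  rw [continuous_iff_continuousAt]
  exact fun x => (phi1_hasDerivAt hlam hth hsig x).differentiableAt.continuousAt

include hlam hth hsig in
theorem phi2_cont : Continuous (phi2 lam th mu sig) := by
  unfold phi2
  have hps : Continuous (psi (PP lam th + 2) (AA th sig) mu) := by
    rw [continuous_iff_continuousAt]
    intro x
    exact (psi_hasDerivAt (PP lam th + 2) (AA th sig) mu
      (by have := hPP hlam hth; linarith) (hAA hth hsig).le x).differentiableAt.continuousAt
  exact continuous_const.mul hps

end OU
end OUaux
namespace OUaux
open Metric Topology Asymptotics

noncomputable def qq (lam th mu sig : ℝ) (Phi : ℝ → ℝ) (b z : ℝ) : ℝ :=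
  Gfun lam th mu Phi b z / OUphi lam th mu sig b
noncomputable def Vv (lam th mu sig : ℝ) (Phi : ℝ → ℝ) (b : ℝ) (x z : ℝ) : ℝ :=
  Gfun lam th mu Phi x z - qq lam th mu sig Phi b z * OUphi lam th mu sig x
noncomputable def Vx (lam th mu sig : ℝ) (Phi : ℝ → ℝ) (b : ℝ) (x z : ℝ) : ℝ :=
  kfun lam th Phi z / (lam + th) - qq lam th mu sig Phi b z * phi1 lam th mu sig x
noncomputable def Vxx (lam th mu sig : ℝ) (Phi : ℝ → ℝ) (b : ℝ) (x z : ℝ) : ℝ :=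
  - qq lam th mu sig Phi b z * phi2 lam th mu sig x

section VL
variable {lam th mu sig : ℝ} {Phi : ℝ → ℝ} {b z : ℝ}
variable (hlam : 0 < lam) (hth : 0 < th) (hsig : 0 < sig)
variable (hkz : 0 < kfun lam th Phi z)
variable (H0 : Hfun lam th mu sig Phi b z = 0)

include hlam hth hsig in
theorem Hfun_eq (x c : ℝ) : Hfun lam th mu sig Phi x c
    = kfun lam th Phi c / (lam + th) * OUphi lam th mu sig x
      - Gfun lam th mu Phi x c * phi1 lam th mu sig x := by
  rw [Hfun, phi_deriv_eq hlam hth hsig]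

include hlam hth hsig hkz H0 in
theorem GB_neg : Gfun lam th mu Phi b z < 0 := by
  rw [Hfun_eq hlam hth hsig] at H0
  have h1 := phi_pos (lam := lam) (th := th) (mu := mu) (sig := sig) hlam hth b
  have h2 := phi1_neg (mu := mu) hlam hth hsig b
  have h3 : 0 < kfun lam th Phi z / (lam + th) := div_pos hkz (by linarith)
  nlinarith [mul_pos h3 h1]

include hlam hth hsig hkz H0 in
theorem qq_neg : qq lam th mu sig Phi b z < 0 :=
  div_neg_of_neg_of_pos (GB_neg hlam hth hsig hkz H0) (phi_pos hlam hth b)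

include hlam hth in
theorem Vv_beta : Vv lam th mu sig Phi b b z = 0 := by
  have h1 := (phi_pos (lam := lam) (th := th) (mu := mu) (sig := sig) hlam hth b).ne'
  rw [Vv, qq]
  field_simp
  ring

include hlam hth hsig H0 in
theorem Vx_beta : Vx lam th mu sig Phi b b z = 0 := by
  rw [Hfun_eq hlam hth hsig] at H0
  rw [Vx, qq]
  have h1 := (phi_pos (lam := lam) (th := th) (mu := mu) (sig := sig) hlam hth b).ne'
  have h2 : lam + th ≠ 0 := by positivity
  field_simp at H0 ⊢
  linarith [H0]

theorem Gz_hasDerivAt (x : ℝ) :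
    HasDerivAt (fun x => Gfun lam th mu Phi x z) (kfun lam th Phi z / (lam + th)) x := by
  unfold Gfun
  have := (((hasDerivAt_id x).sub_const mu).const_mul (kfun lam th Phi z)).div_const (lam + th)
  simpa using this.const_add (mu * (kfun lam th Phi z - th) / lam)

include hlam hth hsig in
theorem Vv_hasDerivAt (x : ℝ) :
    HasDerivAt (fun x => Vv lam th mu sig Phi b x z) (Vx lam th mu sig Phi b x z) x := by
  unfold Vv Vx
  exact (Gz_hasDerivAt x).sub ((phi_hasDerivAt hlam hth hsig x).const_mul _)

include hlam hth hsig in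
theorem Vx_hasDerivAt (x : ℝ) :
    HasDerivAt (fun x => Vx lam th mu sig Phi b x z) (Vxx lam th mu sig Phi b x z) x := by
  unfold Vx Vxx
  have h := ((phi1_hasDerivAt (mu := mu) hlam hth hsig x).const_mul
    (qq lam th mu sig Phi b z)).const_sub (kfun lam th Phi z / (lam + th))
  simpa [neg_mul] using h

include hlam hth hsig hkz H0 in
theorem Vxx_pos (x : ℝ) : 0 < Vxx lam th mu sig Phi b x z := by
  rw [Vxx]
  exact mul_pos (neg_pos.2 (qq_neg hlam hth hsig hkz H0)) (phi2_pos hlam hth hsig x)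

include hlam hth hsig hkz H0 in
theorem Vx_strictMono : StrictMono (fun x => Vx lam th mu sig Phi b x z) := by
  apply strictMono_of_deriv_pos
  intro x
  rw [(Vx_hasDerivAt hlam hth hsig x).deriv]
  exact Vxx_pos hlam hth hsig hkz H0 x

include hlam hth hsig hkz H0 in
theorem Vx_neg_of_lt {x : ℝ} (hx : x < b) : Vx lam th mu sig Phi b x z < 0 := by
  have h := Vx_strictMono hlam hth hsig hkz H0 hx
  simpa [Vx_beta hlam hth hsig H0] using h
include hlam hth hsig hkz H0 in
theorem Vx_pos_of_gt {x : ℝ} (hx : b < x) : 0 < Vx lam th mu sig Phi b x z := by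
  have h := Vx_strictMono hlam hth hsig hkz H0 hx
  simpa [Vx_beta hlam hth hsig H0] using h

include hlam hth hsig hkz H0 in
theorem Vv_cont : Continuous (fun x => Vv lam th mu sig Phi b x z) := by
  rw [continuous_iff_continuousAt]
  exact fun x => (Vv_hasDerivAt hlam hth hsig x).differentiableAt.continuousAt

include hlam hth hsig hkz H0 in
theorem Vv_nonneg_of_le {x : ℝ} (hx : b ≤ x) : 0 ≤ Vv lam th mu sig Phi b x z := by
  have hmono : MonotoneOn (fun x => Vv lam th mu sig Phi b x z) (Set.Ici b) := by
    apply monotoneOn_of_deriv_nonneg (convex_Ici b)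
      (Vv_cont hlam hth hsig hkz H0).continuousOn
    · intro x hx
      exact (Vv_hasDerivAt hlam hth hsig x).differentiableAt.differentiableWithinAt
    · intro x hx
      rw [(Vv_hasDerivAt hlam hth hsig x).deriv]
      rw [interior_Ici] at hx
      exact (Vx_pos_of_gt hlam hth hsig hkz H0 hx).le
  have h := hmono (Set.self_mem_Ici) hx hx
  simpa [Vv_beta hlam hth (mu := mu) (sig := sig) (Phi := Phi) (z := z)] using h

include hlam hth in
theorem u_eq_Vv_max (x : ℝ) :
    ufun lam th mu sig Phi b x z = Vv lam th mu sig Phi b (max x b) z := by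
  unfold ufun
  by_cases hbx : b < x
  · rw [if_pos hbx, max_eq_left hbx.le]; rfl
  · push_neg at hbx
    rw [if_neg (not_lt.2 hbx), max_eq_right hbx, Vv_beta hlam hth]

include hlam hth hsig hkz H0 in
theorem u_nonneg (x : ℝ) : 0 ≤ ufun lam th mu sig Phi b x z := by
  rw [u_eq_Vv_max hlam hth]
  exact Vv_nonneg_of_le hlam hth hsig hkz H0 (le_max_right _ _)

include hlam hth hsig hkz H0 in
theorem u_hasDerivAt (x : ℝ) :
    HasDerivAt (fun x => ufun lam th mu sig Phi b x z) (max (Vx lam th mu sig Phi b x z) 0) x := by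
  rcases lt_trichotomy b x with hbx | rfl | hxb
  · rw [max_eq_left (Vx_pos_of_gt hlam hth hsig hkz H0 hbx).le]
    apply (Vv_hasDerivAt hlam hth hsig x).congr_of_eventuallyEq
    filter_upwards [isOpen_Ioi.mem_nhds (show x ∈ Set.Ioi b from hbx)] with y hy
    rw [ufun, if_pos (show b < y from hy)]; rfl
  · rw [max_eq_right (le_of_eq (Vx_beta hlam hth hsig H0))]
    rw [hasDerivAt_iff_isLittleO]
    have hVv := hasDerivAt_iff_isLittleO.1 (Vv_hasDerivAt (mu := mu) (Phi := Phi) (b := b) (z := z) hlam hth hsig b)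
    rw [Vx_beta hlam hth hsig H0] at hVv
    have hb0 : ufun lam th mu sig Phi b b z = 0 := by rw [ufun, if_neg (lt_irrefl b)]
    have hbO : (fun x' => ufun lam th mu sig Phi b x' z - ufun lam th mu sig Phi b b z
        - (x' - b) • (0:ℝ)) =O[𝓝 b]
        (fun x' => Vv lam th mu sig Phi b x' z - Vv lam th mu sig Phi b b z - (x' - b) • (0:ℝ)) := by
      apply isBigO_of_le
      intro x'
      rw [hb0, Vv_beta hlam hth]
      simp only [smul_eq_mul, mul_zero, sub_zero]
      by_cases h : b < x'
      · rw [ufun, if_pos h]; rfl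
      · rw [ufun, if_neg h]; simp
    exact hbO.trans_isLittleO hVv
  · rw [max_eq_right (Vx_neg_of_lt hlam hth hsig hkz H0 hxb).le]
    apply (hasDerivAt_const x (0:ℝ)).congr_of_eventuallyEq
    filter_upwards [isOpen_Iio.mem_nhds (show x ∈ Set.Iio b from hxb)] with y hy
    rw [ufun, if_neg (not_lt.2 (le_of_lt hy))]

include hlam hth in
theorem LG_eq (x : ℝ) : th * (mu - x) * (kfun lam th Phi z / (lam + th))
    - lam * Gfun lam th mu Phi x z = th * mu - kfun lam th Phi z * x := by
  unfold Gfun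
  have h1 : lam ≠ 0 := hlam.ne'
  have h2 : lam + th ≠ 0 := by positivity
  field_simp
  ring

include hlam hth hsig in
theorem Lv_eq (x : ℝ) :
    1/2 * sig^2 * Vxx lam th mu sig Phi b x z + th * (mu - x) * Vx lam th mu sig Phi b x z
      - lam * Vv lam th mu sig Phi b x z = th * mu - kfun lam th Phi z * x := by
  have hODE := phi_ode (mu := mu) hlam hth hsig x
  have hG := LG_eq (mu := mu) (Phi := Phi) (z := z) hlam hth x
  unfold Vxx Vx Vv
  linear_combination (-(qq lam th mu sig Phi b z)) * hODE + hG

include hlam hth in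
theorem Gz_affine (x : ℝ) : Gfun lam th mu Phi x z
    = Gfun lam th mu Phi b z + kfun lam th Phi z / (lam + th) * (x - b) := by
  unfold Gfun
  have h2 : lam + th ≠ 0 := by positivity
  field_simp
  ring

include hlam hth hsig hkz H0 in
theorem Gz_neg_of_le {x : ℝ} (hx : x ≤ b) : Gfun lam th mu Phi x z < 0 := by
  rw [Gz_affine hlam hth (b := b)]
  have h1 := GB_neg hlam hth hsig hkz H0
  have h3 : 0 < kfun lam th Phi z / (lam + th) := div_pos hkz (by linarith)
  have h4 : kfun lam th Phi z / (lam + th) * (x - b) ≤ 0 :=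
    mul_nonpos_of_nonneg_of_nonpos h3.le (by linarith)
  linarith

include hlam hth hsig in
theorem H_hasDerivAt (x : ℝ) : HasDerivAt (fun x => Hfun lam th mu sig Phi x z)
    (- Gfun lam th mu Phi x z * phi2 lam th mu sig x) x := by
  have heq : (fun x => Hfun lam th mu sig Phi x z) = (fun x =>
      kfun lam th Phi z / (lam + th) * OUphi lam th mu sig x
      - Gfun lam th mu Phi x z * phi1 lam th mu sig x) := by
    funext x; exact Hfun_eq hlam hth hsig x z
  rw [heq]
  have h1 := (phi_hasDerivAt (mu := mu) hlam hth hsig x).const_mul (kfun lam th Phi z / (lam + th))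
  have h2 := (Gz_hasDerivAt (lam := lam) (th := th) (mu := mu) (Phi := Phi) (z := z) x).mul (phi1_hasDerivAt (mu := mu) hlam hth hsig x)
  have h3 := h1.sub h2
  refine h3.congr_deriv ?_
  ring

include hlam hth hsig in
theorem H_cont : Continuous (fun x => Hfun lam th mu sig Phi x z) := by
  rw [continuous_iff_continuousAt]
  exact fun x => (H_hasDerivAt hlam hth hsig x).differentiableAt.continuousAt

include hlam hth hsig hkz H0 in
theorem Hsign_neg {x : ℝ} (hx : x < b) : Hfun lam th mu sig Phi x z < 0 := by
  have hmono : StrictMonoOn (fun x => Hfun lam th mu sig Phi x z) (Set.Iic b) := by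
    apply strictMonoOn_of_deriv_pos (convex_Iic b)
      (H_cont hlam hth hsig).continuousOn
    intro y hy
    rw [interior_Iic] at hy
    rw [(H_hasDerivAt hlam hth hsig y).deriv]
    have hg := Gz_neg_of_le hlam hth hsig hkz H0 (le_of_lt hy)
    have hp := phi2_pos (mu := mu) hlam hth hsig y
    nlinarith
  have h := hmono (Set.mem_Iic.2 hx.le) (Set.mem_Iic.2 le_rfl) hx
  simpa [H0] using h

include hlam hth hsig hkz H0 in
theorem Hsign_pos (huniq : ∀ y : ℝ, Hfun lam th mu sig Phi y z = 0 → y = b)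
    {x : ℝ} (hx : b < x) : 0 < Hfun lam th mu sig Phi x z := by
  by_contra hle
  push_neg at hle
  set w : ℝ := b + (- Gfun lam th mu Phi b z) * (lam + th) / kfun lam th Phi z with hw
  have hwb : b < w := by
    have h1 := GB_neg hlam hth hsig hkz H0
    have h2 : 0 < (- Gfun lam th mu Phi b z) * (lam + th) / kfun lam th Phi z := by
      apply div_pos (mul_pos (by linarith) (by linarith)) hkz
    rw [hw]
    linarith
  have hGw : Gfun lam th mu Phi w z = 0 := by
    rw [Gz_affine hlam hth (b := b), hw]
    field_simp
    ring
  have hHw : 0 < Hfun lam th mu sig Phi w z := by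
    rw [Hfun_eq hlam hth hsig, hGw]
    simp only [zero_mul, sub_zero]
    exact mul_pos (div_pos hkz (by linarith)) (phi_pos hlam hth w)
  have hcont : ContinuousOn (fun x => Hfun lam th mu sig Phi x z) (Set.uIcc x w) :=
    (H_cont hlam hth hsig).continuousOn
  have hmem : (0:ℝ) ∈ Set.uIcc (Hfun lam th mu sig Phi x z) (Hfun lam th mu sig Phi w z) := by
    rw [Set.mem_uIcc]
    left; exact ⟨hle, hHw.le⟩
  obtain ⟨y, hy, hHy⟩ := intermediate_value_uIcc hcont hmem
  have hyb : y = b := huniq y hHy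
  subst hyb
  rcases Set.mem_uIcc.1 hy with ⟨h1, h2⟩ | ⟨h1, h2⟩
  · exact absurd h1 (not_le.2 hx)
  · exact absurd h1 (not_le.2 hwb)
end VL
end OUaux
namespace OUaux
open Metric Topology Asymptotics

section BETA
variable {lam th mu sig : ℝ} {Phi beta : ℝ → ℝ}
variable (hlam : 0 < lam) (hth : 0 < th) (hsig : 0 < sig)
variable (hPhiC2 : ContDiff ℝ 2 Phi)
variable (hk : ∀ c ∈ Set.Icc (0:ℝ) 1, 0 < kfun lam th Phi c)
variable (hbeta : ∀ c ∈ Set.Icc (0:ℝ) 1, Hfun lam th mu sig Phi (beta c) c = 0 ∧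
      beta c < x0fun lam th mu Phi c ∧
      beta c < th * mu / kfun lam th Phi c ∧
      ∀ y : ℝ, Hfun lam th mu sig Phi y c = 0 → y = beta c)

include hPhiC2 in
theorem derivPhi_cont : Continuous (deriv Phi) :=
  hPhiC2.continuous_deriv one_le_two

include hPhiC2 in
theorem kfun_cont : Continuous (kfun lam th Phi) := by
  unfold kfun
  exact continuous_const.add (continuous_const.mul (derivPhi_cont hPhiC2))

include hPhiC2 in
theorem Gc_cont (x : ℝ) : Continuous (fun c => Gfun lam th mu Phi x c) := by
  unfold Gfun
  apply Continuous.add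
  · exact ((continuous_const.mul ((kfun_cont hPhiC2).sub continuous_const)).div_const lam)
  · exact (((kfun_cont hPhiC2).mul continuous_const)).div_const (lam + th)

include hPhiC2 in
theorem Hc_cont (x : ℝ) : Continuous (fun c => Hfun lam th mu sig Phi x c) := by
  unfold Hfun
  apply Continuous.sub
  · exact (((kfun_cont hPhiC2).div_const (lam + th)).mul continuous_const)
  · exact ((Gc_cont hPhiC2 x).mul continuous_const)

include hlam hth hsig hPhiC2 hk hbeta in
theorem beta_contOn : ContinuousOn beta (Set.Icc 0 1) := by
  intro c₀ hc₀
  rw [Metric.continuousWithinAt_iff]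
  intro ε hε
  obtain ⟨H0, _, _, huniq⟩ := hbeta c₀ hc₀
  have hkc₀ := hk c₀ hc₀
  have hneg : Hfun lam th mu sig Phi (beta c₀ - ε/2) c₀ < 0 :=
    Hsign_neg hlam hth hsig hkc₀ H0 (by linarith)
  have hpos : 0 < Hfun lam th mu sig Phi (beta c₀ + ε/2) c₀ :=
    Hsign_pos hlam hth hsig hkc₀ H0 huniq (by linarith)
  have hS : IsOpen {c : ℝ | Hfun lam th mu sig Phi (beta c₀ - ε/2) c < 0 ∧
      0 < Hfun lam th mu sig Phi (beta c₀ + ε/2) c} :=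
    (isOpen_lt (Hc_cont hPhiC2 _) continuous_const).inter
      (isOpen_lt continuous_const (Hc_cont hPhiC2 _))
  obtain ⟨δ, hδ, hball⟩ := Metric.isOpen_iff.1 hS c₀ ⟨hneg, hpos⟩
  refine ⟨δ, hδ, fun c hc hdist => ?_⟩
  obtain ⟨hc1, hc2⟩ := hball (Metric.mem_ball.2 hdist)
  obtain ⟨H0c, _, _, huniqc⟩ := hbeta c hc
  have hkc := hk c hc
  have hlow : beta c₀ - ε/2 ≤ beta c := by
    by_contra hlt
    push_neg at hlt
    exact absurd (Hsign_pos hlam hth hsig hkc H0c huniqc hlt) (not_lt.2 hc1.le)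
  have hhigh : beta c ≤ beta c₀ + ε/2 := by
    by_contra hlt
    push_neg at hlt
    exact absurd (Hsign_neg hlam hth hsig hkc H0c hlt) (not_lt.2 hc2.le)
  rw [Real.dist_eq, abs_lt]
  constructor <;> [linarith; linarith]

end BETA

noncomputable def clamp01 (y : ℝ) : ℝ := max 0 (min y 1)

theorem clamp01_mem (y : ℝ) : clamp01 y ∈ Set.Icc (0:ℝ) 1 := by
  constructor
  · exact le_max_left _ _
  · apply max_le (by norm_num) (min_le_right _ _)

theorem clamp01_eq {y : ℝ} (hy : y ∈ Set.Icc (0:ℝ) 1) : clamp01 y = y := by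
  rw [clamp01, min_eq_left hy.2, max_eq_right hy.1]

theorem clamp01_cont : Continuous clamp01 :=
  continuous_const.max (continuous_id.min continuous_const)

theorem clamp01_mono : Monotone clamp01 := fun a b hab =>
  max_le_max le_rfl (min_le_min hab le_rfl)

theorem exists_bound_cont {f : ℝ → ℝ} {s : Set ℝ} (hs : IsCompact s)
    (hf : ContinuousOn f s) : ∃ C : ℝ, 0 ≤ C ∧ ∀ z ∈ s, |f z| ≤ C := by
  obtain ⟨C, hC⟩ := hs.exists_bound_of_continuousOn hf
  exact ⟨max C 0, le_max_right _ _, fun z hz =>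
    le_trans (by simpa [Real.norm_eq_abs] using hC z hz) (le_max_left _ _)⟩

end OUaux
namespace OUaux
open Metric Topology Asymptotics

section PC
variable {lam th mu sig : ℝ} {Phi : ℝ → ℝ}
variable (hlam : 0 < lam) (hth : 0 < th) (hsig : 0 < sig) (hPhiC2 : ContDiff ℝ 2 Phi)
variable {bf zf wf : ℝ → ℝ} (hbf : Continuous bf) (hzf : Continuous zf) (hwf : Continuous wf)

include hPhiC2 hzf hwf in
theorem Gfun_param_cont : Continuous (fun y => Gfun lam th mu Phi (wf y) (zf y)) := by
  unfold Gfun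
  apply Continuous.add
  · exact ((continuous_const.mul (((kfun_cont hPhiC2).comp hzf).sub continuous_const)).div_const lam)
  · exact (((kfun_cont hPhiC2).comp hzf).mul (hwf.sub continuous_const)).div_const (lam + th)

include hlam hth hsig hPhiC2 hbf hzf in
theorem qq_param_cont : Continuous (fun y => qq lam th mu sig Phi (bf y) (zf y)) := by
  unfold qq
  apply Continuous.div (Gfun_param_cont hPhiC2 hzf hbf)
    ((phi_cont hlam hth hsig).comp hbf)
  exact fun y => (phi_pos hlam hth (bf y)).ne'

include hlam hth hsig hPhiC2 hbf hzf hwf in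
theorem Vv_param_cont : Continuous (fun y => Vv lam th mu sig Phi (bf y) (wf y) (zf y)) := by
  unfold Vv
  exact (Gfun_param_cont hPhiC2 hzf hwf).sub
    ((qq_param_cont hlam hth hsig hPhiC2 hbf hzf).mul ((phi_cont hlam hth hsig).comp hwf))

include hlam hth hsig hPhiC2 hbf hzf in
theorem Vx_param_cont (x : ℝ) :
    Continuous (fun y => Vx lam th mu sig Phi (bf y) x (zf y)) := by
  unfold Vx
  exact (((kfun_cont hPhiC2).comp hzf).div_const (lam + th)).sub
    ((qq_param_cont hlam hth hsig hPhiC2 hbf hzf).mul continuous_const)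

end PC

theorem abs_sub_le' (u v : ℝ) : |u - v| ≤ |u| + |v| := by
  rw [sub_eq_add_neg]
  exact (abs_add_le _ _).trans (by rw [abs_neg])

theorem max_lip : LipschitzWith 1 (fun a : ℝ => max a 0) :=
  LipschitzWith.of_dist_le_mul fun a b => by
    simp only [NNReal.coe_one, one_mul, Real.dist_eq]
    exact abs_max_sub_max_le_abs a b 0

end OUaux

open OUaux Metric Topology Asymptotics in
theorem statement12 (lam th mu sig : ℝ)
    (hlam : 0 < lam) (hth : 0 < th) (hmu : 0 < mu) (hsig : 0 < sig)
    (Phi : ℝ → ℝ) (hPhiC2 : ContDiff ℝ 2 Phi)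
    (hPhiconv : StrictConvexOn ℝ Set.univ Phi)
    (hPhi' : ∀ c ∈ Set.Icc (0:ℝ) 1, deriv Phi c < 0) (hPhi1 : Phi 1 = 0)
    (hk : ∀ c ∈ Set.Icc (0:ℝ) 1, 0 < kfun lam th Phi c)
    (beta : ℝ → ℝ)
    (hbeta : ∀ c ∈ Set.Icc (0:ℝ) 1, Hfun lam th mu sig Phi (beta c) c = 0 ∧
      beta c < x0fun lam th mu Phi c ∧
      beta c < th * mu / kfun lam th Phi c ∧
      ∀ y : ℝ, Hfun lam th mu sig Phi y c = 0 → y = beta c)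
    (hbetadec : StrictAntiOn beta (Set.Icc (0:ℝ) 1)) :
    ∀ x : ℝ, ∀ c ∈ Set.Icc (0:ℝ) 1,
      (-x ≤ derivWithin (fun c => Ffun lam th mu sig Phi beta x c) (Set.Icc (0:ℝ) 1) c) ∧
      (-(lam * x * Phi c) ≤
        1 / 2 * sig ^ 2 * deriv (deriv (fun x => Ffun lam th mu sig Phi beta x c)) x
          + th * (mu - x) * deriv (fun x => Ffun lam th mu sig Phi beta x c) x
          - lam * Ffun lam th mu sig Phi beta x c) ∧
      (x ≤ beta c →
        derivWithin (fun c => Ffun lam th mu sig Phi beta x c) (Set.Icc (0:ℝ) 1) c = -x) ∧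
      (beta c ≤ x →
        1 / 2 * sig ^ 2 * deriv (deriv (fun x => Ffun lam th mu sig Phi beta x c)) x
          + th * (mu - x) * deriv (fun x => Ffun lam th mu sig Phi beta x c) x
          - lam * Ffun lam th mu sig Phi beta x c
        = -(lam * x * Phi c)) ∧
      (max
        (lam * Ffun lam th mu sig Phi beta x c
          - (1 / 2 * sig ^ 2 * deriv (deriv (fun x => Ffun lam th mu sig Phi beta x c)) x
              + th * (mu - x) * deriv (fun x => Ffun lam th mu sig Phi beta x c) x)
          - lam * x * Phi c)
        (-(derivWithin (fun c => Ffun lam th mu sig Phi beta x c) (Set.Icc (0:ℝ) 1) c) - x)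
        = 0) := by
  intro x c hc
  obtain ⟨hc0, hc1⟩ := hc
  have hlt : (0:ℝ) < lam + th := by linarith
  -- clamped boundary and integrand families
  set B : ℝ → ℝ := fun y => beta (clamp01 y) with hB
  set W : ℝ → ℝ → ℝ := fun x' y => ufun lam th mu sig Phi (B y) x' (clamp01 y) with hWdef
  set W1 : ℝ → ℝ → ℝ := fun x' y =>
    max (Vx lam th mu sig Phi (B y) x' (clamp01 y)) 0 with hW1def
  set W2 : ℝ → ℝ → ℝ := fun x' y =>
    if B y < x' then Vxx lam th mu sig Phi (B y) x' (clamp01 y) else 0 with hW2def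
  have hkz : ∀ y : ℝ, 0 < kfun lam th Phi (clamp01 y) := fun y => hk _ (clamp01_mem y)
  have hH0 : ∀ y : ℝ, Hfun lam th mu sig Phi (B y) (clamp01 y) = 0 :=
    fun y => (hbeta _ (clamp01_mem y)).1
  have hβcont : ContinuousOn beta (Set.Icc 0 1) :=
    beta_contOn hlam hth hsig hPhiC2 hk hbeta
  have hBcont : Continuous B := hβcont.comp_continuous clamp01_cont (fun y => clamp01_mem y)
  -- continuity of integrand families in y
  have hWcont : ∀ x' : ℝ, Continuous (fun y => W x' y) := by
    intro x'
    have heq : (fun y => W x' y)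
        = fun y => Vv lam th mu sig Phi (B y) (max x' (B y)) (clamp01 y) := by
      funext y; exact u_eq_Vv_max hlam hth x'
    rw [heq]
    exact Vv_param_cont hlam hth hsig hPhiC2 hBcont clamp01_cont
      (continuous_const.max hBcont)
  have hW1cont : ∀ x' : ℝ, Continuous (fun y => W1 x' y) := by
    intro x'
    exact (Vx_param_cont hlam hth hsig hPhiC2 hBcont clamp01_cont x').max continuous_const
  have hW2meas : ∀ x' : ℝ, Measurable (fun y => W2 x' y) := by
    intro x'
    apply Measurable.ite
    · exact (isOpen_lt hBcont continuous_const).measurableSet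
    · have : Continuous (fun y => Vxx lam th mu sig Phi (B y) x' (clamp01 y)) := by
        unfold Vxx
        exact ((qq_param_cont hlam hth hsig hPhiC2 hBcont clamp01_cont).neg).mul
          continuous_const
      exact this.measurable
    · exact measurable_const
  -- global bounds for q and k along the clamped families
  obtain ⟨Cq, hCq0, hCq⟩ := exists_bound_cont isCompact_Icc
    ((qq_param_cont hlam hth hsig hPhiC2 hBcont clamp01_cont).continuousOn
      (s := Set.Icc (0:ℝ) 1))
  obtain ⟨Ck, hCk0, hCk⟩ := exists_bound_cont isCompact_Icc
    (((kfun_cont hPhiC2).comp clamp01_cont).continuousOn (s := Set.Icc (0:ℝ) 1))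
  have hclid : ∀ y : ℝ, clamp01 (clamp01 y) = clamp01 y := fun y => clamp01_eq (clamp01_mem y)
  have hqb : ∀ y : ℝ, |qq lam th mu sig Phi (B y) (clamp01 y)| ≤ Cq := by
    intro y
    have := hCq (clamp01 y) (clamp01_mem y)
    simpa [hB, hclid y] using this
  have hkb : ∀ y : ℝ, |kfun lam th Phi (clamp01 y)| ≤ Ck := by
    intro y
    have := hCk (clamp01 y) (clamp01_mem y)
    simpa [hclid y] using this
  have hμfin : volume (Set.Ioc c 1) < ⊤ := measure_Ioc_lt_top
  -- first differentiation under the integral sign, at every point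
  have hJ1 : ∀ x₀ : ℝ, HasDerivAt (fun x' => ∫ y in Set.Ioc c 1, W x' y)
      (∫ y in Set.Ioc c 1, W1 x₀ y) x₀ := by
    intro x₀
    obtain ⟨C1, hC10, hC1⟩ := exists_bound_cont (isCompact_closedBall x₀ 1)
      ((phi1_cont hlam hth hsig (mu := mu)).continuousOn (s := closedBall x₀ 1))
    have key := hasDerivAt_integral_of_dominated_loc_of_deriv_le
      (μ := volume.restrict (Set.Ioc c 1)) (F := W) (F' := W1) (x₀ := x₀)
      (bound := fun _ => Ck / (lam + th) + Cq * C1) (ball_mem_nhds x₀ one_pos)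
      ?meas ?int ?meas' ?bdd ?bint ?diff
    case meas =>
      exact Eventually.of_forall fun x' => (hWcont x').aestronglyMeasurable
    case int => exact (hWcont x₀).integrableOn_Ioc
    case meas' => exact (hW1cont x₀).aestronglyMeasurable
    case bdd =>
      apply Eventually.of_forall
      intro y x' hx'
      have hb1 : |phi1 lam th mu sig x'| ≤ C1 := hC1 x' (ball_subset_closedBall hx')
      have : |Vx lam th mu sig Phi (B y) x' (clamp01 y)| ≤ Ck / (lam + th) + Cq * C1 := by
        rw [Vx]
        refine (abs_sub_le' _ _).trans ?_
        apply add_le_add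
        · rw [abs_div, abs_of_pos hlt]
          gcongr
          exact hkb y
        · rw [abs_mul]
          exact mul_le_mul (hqb y) hb1 (abs_nonneg _) hCq0
      simp only [hW1def, Real.norm_eq_abs]
      refine le_trans ?_ this
      rw [abs_le]
      constructor
      · exact le_trans (neg_nonpos_of_nonneg (abs_nonneg _)) (le_max_right _ _)
      · exact max_le (le_abs_self _) (abs_nonneg _)
    case bint =>
      exact integrableOn_const (C := Ck / (lam + th) + Cq * C1) hμfin.ne
    case diff =>
      apply Eventually.of_forall
      intro y x' hx'
      exact u_hasDerivAt hlam hth hsig (hkz y) (hH0 y) x'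
    exact key.2

  -- second differentiation under the integral sign, at the point x
  obtain ⟨C2, hC20, hC2⟩ := exists_bound_cont (isCompact_closedBall x 1)
    ((phi2_cont hlam hth hsig (mu := mu)).continuousOn (s := closedBall x 1))
  -- the exceptional set where the boundary passes through x
  have hae_ne : ∀ᵐ y ∂(volume.restrict (Set.Ioc c 1)), B y ≠ x := by
    have hsub : {y : ℝ | y ∈ Set.Ioc c 1 ∧ B y = x}.Subsingleton := by
      intro y1 hy1 y2 hy2
      have hm1 : y1 ∈ Set.Icc (0:ℝ) 1 := ⟨le_trans hc0 hy1.1.1.le, hy1.1.2⟩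
      have hm2 : y2 ∈ Set.Icc (0:ℝ) 1 := ⟨le_trans hc0 hy2.1.1.le, hy2.1.2⟩
      have he1 : beta y1 = x := by
        have := hy1.2; simp only [hB] at this; rwa [clamp01_eq hm1] at this
      have he2 : beta y2 = x := by
        have := hy2.2; simp only [hB] at this; rwa [clamp01_eq hm2] at this
      by_contra hne
      rcases lt_or_gt_of_ne hne with hlt' | hlt'
      · have := hbetadec hm1 hm2 hlt'; rw [he1, he2] at this; exact lt_irrefl x this
      · have := hbetadec hm2 hm1 hlt'; rw [he1, he2] at this; exact lt_irrefl x this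
    have hnull : volume {y : ℝ | y ∈ Set.Ioc c 1 ∧ B y = x} = 0 :=
      Set.Subsingleton.measure_zero hsub volume
    have h1 : ∀ᵐ y ∂volume, y ∉ {y : ℝ | y ∈ Set.Ioc c 1 ∧ B y = x} :=
      (MeasureTheory.measure_eq_zero_iff_ae_notMem).1 hnull
    filter_upwards [ae_restrict_of_ae h1, ae_restrict_mem measurableSet_Ioc] with y hy1 hy2
    intro hBx
    exact hy1 ⟨hy2, hBx⟩
  have hJ2 : HasDerivAt (fun x' => ∫ y in Set.Ioc c 1, W1 x' y)
      (∫ y in Set.Ioc c 1, W2 x y) x := by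
    have key := hasDerivAt_integral_of_dominated_loc_of_lip
      (μ := volume.restrict (Set.Ioc c 1)) (F := W1) (F' := W2 x) (x₀ := x)
      (bound := fun _ => Cq * C2) (ball_mem_nhds x one_pos)
      ?meas ?int ?meas' ?lip ?bint ?diff
    case meas =>
      exact Eventually.of_forall fun x' => (hW1cont x').aestronglyMeasurable
    case int => exact (hW1cont x).integrableOn_Ioc
    case meas' => exact (hW2meas x).aestronglyMeasurable
    case lip =>
      apply Eventually.of_forall
      intro y
      have hVxLip : LipschitzOnWith (Real.nnabs (Cq * C2))
          (fun x' => Vx lam th mu sig Phi (B y) x' (clamp01 y)) (ball x 1) := by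
        apply (convex_ball x 1).lipschitzOnWith_of_nnnorm_hasDerivWithin_le
          (f' := fun x' => Vxx lam th mu sig Phi (B y) x' (clamp01 y))
          (fun x' hx' => (Vx_hasDerivAt hlam hth hsig x').hasDerivWithinAt)
        intro x' hx'
        rw [← NNReal.coe_le_coe, coe_nnnorm, Real.coe_nnabs, Real.norm_eq_abs]
        have h1 : |Vxx lam th mu sig Phi (B y) x' (clamp01 y)| ≤ Cq * C2 := by
          rw [Vxx, abs_mul, abs_neg]
          exact mul_le_mul (hqb y) (hC2 x' (ball_subset_closedBall hx'))
            (abs_nonneg _) hCq0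
        exact h1.trans (le_abs_self _)
      have := max_lip.comp_lipschitzOnWith hVxLip
      simpa [hW1def, Function.comp_def] using this
    case bint =>
      exact integrableOn_const (C := Cq * C2) hμfin.ne
    case diff =>
      filter_upwards [hae_ne] with y hy
      rcases lt_or_gt_of_ne hy with hBy | hBy
      · simp only [hW2def, if_pos hBy]
        apply (Vx_hasDerivAt hlam hth hsig x).congr_of_eventuallyEq
        filter_upwards [isOpen_Ioi.mem_nhds (show x ∈ Set.Ioi (B y) from hBy)] with x' hx'
        simp only [hW1def]
        exact max_eq_left (Vx_pos_of_gt hlam hth hsig (hkz y) (hH0 y) hx').le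
      · simp only [hW2def, if_neg (not_lt.2 hBy.le)]
        apply (hasDerivAt_const x (0:ℝ)).congr_of_eventuallyEq
        filter_upwards [isOpen_Iio.mem_nhds (show x ∈ Set.Iio (B y) from hBy)] with x' hx'
        simp only [hW1def]
        exact max_eq_right (Vx_neg_of_lt hlam hth hsig (hkz y) (hH0 y) hx').le
    exact key.2
  -- rewrite F in x-direction
  have hFx_fun : (fun x' => Ffun lam th mu sig Phi beta x' c)
      = fun x' => x' * (1 - c) - ∫ y in Set.Ioc c 1, W x' y := by
    funext x'
    rw [Ffun]
    congr 1
    rw [intervalIntegral.integral_of_le hc1]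
    apply MeasureTheory.setIntegral_congr_fun measurableSet_Ioc
    intro y hy
    have hmem : y ∈ Set.Icc (0:ℝ) 1 := ⟨le_trans hc0 hy.1.le, hy.2⟩
    simp only [hWdef, hB, clamp01_eq hmem]
  have hDeriv1 : ∀ x₀ : ℝ, HasDerivAt (fun x' => Ffun lam th mu sig Phi beta x' c)
      ((1 - c) - ∫ y in Set.Ioc c 1, W1 x₀ y) x₀ := by
    intro x₀
    rw [hFx_fun]
    have h1 : HasDerivAt (fun x' : ℝ => x' * (1 - c)) (1 - c) x₀ := by
      simpa using (hasDerivAt_id x₀).mul_const (1 - c)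
    exact h1.sub (hJ1 x₀)
  have hderivF_eq : deriv (fun x' => Ffun lam th mu sig Phi beta x' c)
      = fun x₀ => (1 - c) - ∫ y in Set.Ioc c 1, W1 x₀ y :=
    funext fun x₀ => (hDeriv1 x₀).deriv
  have hFxx : deriv (deriv (fun x' => Ffun lam th mu sig Phi beta x' c)) x
      = - ∫ y in Set.Ioc c 1, W2 x y := by
    rw [hderivF_eq]
    exact (hJ2.const_sub (1 - c)).deriv
  have hFx : deriv (fun x' => Ffun lam th mu sig Phi beta x' c) x
      = (1 - c) - ∫ y in Set.Ioc c 1, W1 x y := (hDeriv1 x).deriv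
  have hFval : Ffun lam th mu sig Phi beta x c
      = x * (1 - c) - ∫ y in Set.Ioc c 1, W x y := by
    have := congrFun hFx_fun x
    exact this
  -- the combined integrand identity
  set T : ℝ → ℝ := fun y =>
    if B y < x then th * mu - kfun lam th Phi (clamp01 y) * x else 0 with hTdef
  have hWint : IntegrableOn (fun y => W x y) (Set.Ioc c 1) := (hWcont x).integrableOn_Ioc
  have hW1int : IntegrableOn (fun y => W1 x y) (Set.Ioc c 1) := (hW1cont x).integrableOn_Ioc
  have hW2int : IntegrableOn (fun y => W2 x y) (Set.Ioc c 1) := by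
    apply Integrable.mono'
      (integrableOn_const (C := Cq * |phi2 lam th mu sig x|) hμfin.ne)
      (hW2meas x).aestronglyMeasurable
    apply Eventually.of_forall
    intro y
    simp only [Real.norm_eq_abs, hW2def]
    by_cases h : B y < x
    · simp only [if_pos h]
      rw [Vxx, abs_mul, abs_neg]
      exact mul_le_mul (hqb y) le_rfl (abs_nonneg _) hCq0
    · simp only [if_neg h, abs_zero]
      positivity
  have hTmeas : Measurable T := by
    apply Measurable.ite
    · exact (isOpen_lt hBcont continuous_const).measurableSet
    · exact (continuous_const.sub (((kfun_cont hPhiC2).comp clamp01_cont).mul continuous_const)).measurable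
    · exact measurable_const
  have hTint : IntegrableOn T (Set.Ioc c 1) := by
    apply Integrable.mono'
      (integrableOn_const (C := |th * mu| + Ck * |x|) hμfin.ne)
      hTmeas.aestronglyMeasurable
    apply Eventually.of_forall
    intro y
    simp only [Real.norm_eq_abs, hTdef]
    by_cases h : B y < x
    · simp only [if_pos h]
      refine (abs_sub_le' _ _).trans ?_
      apply add_le_add le_rfl
      rw [abs_mul]
      exact mul_le_mul_of_nonneg_right (hkb y) (abs_nonneg _)
    · simp only [if_neg h, abs_zero]
      positivity
  have hkcl_int : IntegrableOn (fun y => th * mu - kfun lam th Phi (clamp01 y) * x)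
      (Set.Ioc c 1) :=
    (continuous_const.sub (((kfun_cont hPhiC2).comp clamp01_cont).mul continuous_const)).integrableOn_Ioc
  -- a.e. pointwise PDE identity for the integrands
  have haeLW : ∀ᵐ y ∂(volume.restrict (Set.Ioc c 1)),
      1/2 * sig^2 * W2 x y + th * (mu - x) * W1 x y - lam * W x y = T y := by
    filter_upwards [hae_ne] with y hy
    rcases lt_or_gt_of_ne hy with hBy | hBy
    · have e2 : W2 x y = Vxx lam th mu sig Phi (B y) x (clamp01 y) := by
        simp only [hW2def, if_pos hBy]
      have e1 : W1 x y = Vx lam th mu sig Phi (B y) x (clamp01 y) := by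
        simp only [hW1def]
        exact max_eq_left (Vx_pos_of_gt hlam hth hsig (hkz y) (hH0 y) hBy).le
      have e0 : W x y = Vv lam th mu sig Phi (B y) x (clamp01 y) := by
        simp only [hWdef]
        rw [ufun, if_pos hBy]; rfl
      have eT : T y = th * mu - kfun lam th Phi (clamp01 y) * x := by
        simp only [hTdef, if_pos hBy]
      rw [e2, e1, e0, eT]
      exact Lv_eq hlam hth hsig x
    · have e2 : W2 x y = 0 := by
        simp only [hW2def, if_neg (not_lt.2 hBy.le)]
      have e1 : W1 x y = 0 := by
        simp only [hW1def]
        exact max_eq_right (Vx_neg_of_lt hlam hth hsig (hkz y) (hH0 y) hBy).le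
      have e0 : W x y = 0 := by
        simp only [hWdef]
        rw [ufun, if_neg (not_lt.2 hBy.le)]
      have eT : T y = 0 := by
        simp only [hTdef, if_neg (not_lt.2 hBy.le)]
      rw [e2, e1, e0, eT]
      ring
  -- integral of the combined integrand
  have hintLW : (1/2 * sig^2) * (∫ y in Set.Ioc c 1, W2 x y)
      + (th * (mu - x)) * (∫ y in Set.Ioc c 1, W1 x y)
      - lam * (∫ y in Set.Ioc c 1, W x y)
      = ∫ y in Set.Ioc c 1, T y := by
    have i1 : IntegrableOn (fun y => 1/2 * sig^2 * W2 x y) (Set.Ioc c 1) :=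
      hW2int.const_mul _
    have i2 : IntegrableOn (fun y => th * (mu - x) * W1 x y) (Set.Ioc c 1) :=
      hW1int.const_mul _
    have i3 : IntegrableOn (fun y => lam * W x y) (Set.Ioc c 1) := hWint.const_mul _
    have i12 : IntegrableOn (fun y => 1/2 * sig^2 * W2 x y + th * (mu - x) * W1 x y)
        (Set.Ioc c 1) := i1.add i2
    have e : ∫ y in Set.Ioc c 1,
        (1/2 * sig^2 * W2 x y + th * (mu - x) * W1 x y - lam * W x y)
        = ∫ y in Set.Ioc c 1, T y := MeasureTheory.integral_congr_ae haeLW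
    rw [MeasureTheory.integral_sub i12 i3, MeasureTheory.integral_add i1 i2,
      MeasureTheory.integral_const_mul, MeasureTheory.integral_const_mul,
      MeasureTheory.integral_const_mul] at e
    exact e
  -- pointwise comparison of T with the full linear term
  have hTle : ∀ y ∈ Set.Ioc c 1, T y ≤ th * mu - kfun lam th Phi (clamp01 y) * x := by
    intro y hy
    have hmem : y ∈ Set.Icc (0:ℝ) 1 := ⟨le_trans hc0 hy.1.le, hy.2⟩
    simp only [hTdef]
    by_cases h : B y < x
    · simp only [if_pos h]; exact le_rfl
    · simp only [if_neg h]
      push_neg at h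
      have hcl : clamp01 y = y := clamp01_eq hmem
      have hblt : beta y < th * mu / kfun lam th Phi y := (hbeta y hmem).2.2.1
      have hky : 0 < kfun lam th Phi y := hk y hmem
      have hxb : x ≤ beta y := by
        simp only [hB] at h; rwa [hcl] at h
      have hkey : kfun lam th Phi y * x < th * mu := by
        have h1 : kfun lam th Phi y * x ≤ kfun lam th Phi y * beta y :=
          mul_le_mul_of_nonneg_left hxb hky.le
        have h2 : kfun lam th Phi y * beta y < th * mu := by
          rw [mul_comm]
          exact (lt_div_iff₀ hky).1 hblt
        linarith
      rw [hcl]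
      linarith
  -- the key integral identity for the linear term
  have hintk : ∫ y in Set.Ioc c 1, (th * mu - kfun lam th Phi (clamp01 y) * x)
      = th * mu * (1 - c) - ((lam + th) * (1 - c) - lam * Phi c) * x := by
    have hstep1 : ∫ y in Set.Ioc c 1, (th * mu - kfun lam th Phi (clamp01 y) * x)
        = ∫ y in Set.Ioc c 1, (th * mu - kfun lam th Phi y * x) := by
      apply MeasureTheory.setIntegral_congr_fun measurableSet_Ioc
      intro y hy
      have hmem : y ∈ Set.Icc (0:ℝ) 1 := ⟨le_trans hc0 hy.1.le, hy.2⟩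
      simp only [clamp01_eq hmem]
    rw [hstep1]
    have hkint : IntegrableOn (fun y => kfun lam th Phi y * x) (Set.Ioc c 1) :=
      ((kfun_cont hPhiC2).mul continuous_const).integrableOn_Ioc
    have hcint : IntegrableOn (fun _ : ℝ => th * mu) (Set.Ioc c 1) :=
      integrableOn_const (C := th * mu) hμfin.ne
    rw [MeasureTheory.integral_sub hcint hkint]
    have hconst : ∫ _ in Set.Ioc c 1, (th * mu) = th * mu * (1 - c) := by
      rw [MeasureTheory.setIntegral_const, Real.volume_real_Ioc,
        max_eq_left (by linarith : (0:ℝ) ≤ 1 - c)]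
      rw [smul_eq_mul]; ring
    have hkx : ∫ y in Set.Ioc c 1, kfun lam th Phi y * x
        = ((lam + th) * (1 - c) - lam * Phi c) * x := by
      rw [MeasureTheory.integral_mul_const]
      congr 1
      have hksplit : ∫ y in Set.Ioc c 1, kfun lam th Phi y
          = ((lam + th) * (1 - c)) + lam * ∫ y in Set.Ioc c 1, deriv Phi y := by
        have h1 : IntegrableOn (fun _ : ℝ => lam + th) (Set.Ioc c 1) :=
          integrableOn_const hμfin.ne
        have h2 : IntegrableOn (fun y => lam * deriv Phi y) (Set.Ioc c 1) :=
          (continuous_const.mul (derivPhi_cont hPhiC2)).integrableOn_Ioc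
        rw [show (fun y => kfun lam th Phi y) = fun y => (lam + th) + lam * deriv Phi y by
          funext y; rw [kfun]]
        rw [MeasureTheory.integral_add h1 h2, MeasureTheory.integral_const_mul]
        congr 1
        rw [MeasureTheory.setIntegral_const, Real.volume_real_Ioc,
          max_eq_left (by linarith : (0:ℝ) ≤ 1 - c), smul_eq_mul]
        ring
      have hftc : ∫ y in Set.Ioc c 1, deriv Phi y = - Phi c := by
        rw [← intervalIntegral.integral_of_le hc1]
        rw [intervalIntegral.integral_deriv_eq_sub
          (fun y _ => (hPhiC2.differentiable two_ne_zero).differentiableAt)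
          ((derivPhi_cont hPhiC2).intervalIntegrable c 1)]
        rw [hPhi1]; ring
      rw [hksplit, hftc]
      ring
    rw [hconst, hkx]
  -- value of the elliptic operator applied to F
  have hLF : 1 / 2 * sig ^ 2 * deriv (deriv (fun x' => Ffun lam th mu sig Phi beta x' c)) x
      + th * (mu - x) * deriv (fun x' => Ffun lam th mu sig Phi beta x' c) x
      - lam * Ffun lam th mu sig Phi beta x c
      = th * (mu - x) * (1 - c) - lam * (x * (1 - c)) - ∫ y in Set.Ioc c 1, T y := by
    rw [hFxx, hFx, hFval, ← hintLW]
    ring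
  have hIdent : th * (mu - x) * (1 - c) - lam * (x * (1 - c))
      - (∫ y in Set.Ioc c 1, (th * mu - kfun lam th Phi (clamp01 y) * x))
      = -(lam * x * Phi c) := by
    rw [hintk]; ring
  -- the differential inequality
  have hPDEineq : -(lam * x * Phi c)
      ≤ 1 / 2 * sig ^ 2 * deriv (deriv (fun x' => Ffun lam th mu sig Phi beta x' c)) x
        + th * (mu - x) * deriv (fun x' => Ffun lam th mu sig Phi beta x' c) x
        - lam * Ffun lam th mu sig Phi beta x c := by
    rw [hLF, ← hIdent]
    have := MeasureTheory.setIntegral_mono_on hTint hkcl_int measurableSet_Ioc hTle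
    linarith
  -- equality in the continuation region
  have hPDEeq : beta c ≤ x →
      1 / 2 * sig ^ 2 * deriv (deriv (fun x' => Ffun lam th mu sig Phi beta x' c)) x
        + th * (mu - x) * deriv (fun x' => Ffun lam th mu sig Phi beta x' c) x
        - lam * Ffun lam th mu sig Phi beta x c = -(lam * x * Phi c) := by
    intro hbx
    rw [hLF, ← hIdent]
    have hTeq : ∫ y in Set.Ioc c 1, T y
        = ∫ y in Set.Ioc c 1, (th * mu - kfun lam th Phi (clamp01 y) * x) := by
      apply MeasureTheory.setIntegral_congr_fun measurableSet_Ioc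
      intro y hy
      have hmem : y ∈ Set.Icc (0:ℝ) 1 := ⟨le_trans hc0 hy.1.le, hy.2⟩
      have hby : beta y < beta c := hbetadec ⟨hc0, hc1⟩ hmem hy.1
      have hBylt : B y < x := by
        simp only [hB, clamp01_eq hmem]; linarith
      simp only [hTdef, if_pos hBylt]
    rw [hTeq]
  -- the c-derivative
  have hucx : W x c = ufun lam th mu sig Phi (beta c) x c := by
    simp only [hWdef, hB, clamp01_eq (Set.mem_Icc.2 ⟨hc0, hc1⟩)]
  have hFc : derivWithin (fun c' => Ffun lam th mu sig Phi beta x c') (Set.Icc (0:ℝ) 1) c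
      = -x + W x c := by
    have hgF : ∀ c' ∈ Set.Icc (0:ℝ) 1, Ffun lam th mu sig Phi beta x c'
        = x * (1 - c') - ∫ y in c'..(1:ℝ), W x y := by
      intro c' hc'
      rw [Ffun]
      congr 1
      apply intervalIntegral.integral_congr
      intro y hy
      rw [Set.uIcc_of_le hc'.2] at hy
      have hmem : y ∈ Set.Icc (0:ℝ) 1 := ⟨le_trans hc'.1 hy.1, hy.2⟩
      simp only [hWdef, hB, clamp01_eq hmem]
    have hg : HasDerivAt (fun c' => x * (1 - c') - ∫ y in c'..(1:ℝ), W x y)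
        (-x + W x c) c := by
      have h1 : HasDerivAt (fun c' : ℝ => x * (1 - c')) (-x) c := by
        simpa using ((hasDerivAt_id c).const_sub 1).const_mul x
      have h2 : HasDerivAt (fun c' => ∫ y in c'..(1:ℝ), W x y) (-(W x c)) c := by
        apply intervalIntegral.integral_hasDerivAt_left
          ((hWcont x).intervalIntegrable c 1)
          ((hWcont x).stronglyMeasurableAtFilter _ _)
          (hWcont x).continuousAt
      have := h1.sub h2
      exact this.congr_deriv (by ring)
    rw [derivWithin_congr hgF (hgF c ⟨hc0, hc1⟩)]
    rw [(hg.hasDerivWithinAt).derivWithin ((uniqueDiffOn_Icc one_pos) c ⟨hc0, hc1⟩)]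
  have hFc_ge : -x ≤ derivWithin (fun c' => Ffun lam th mu sig Phi beta x c')
      (Set.Icc (0:ℝ) 1) c := by
    rw [hFc, hucx]
    have := u_nonneg hlam hth hsig (hkz c) (hH0 c) x
    simp only [hB, clamp01_eq (Set.mem_Icc.2 ⟨hc0, hc1⟩)] at this
    linarith
  have hFc_eq : x ≤ beta c → derivWithin (fun c' => Ffun lam th mu sig Phi beta x c')
      (Set.Icc (0:ℝ) 1) c = -x := by
    intro hxb
    rw [hFc, hucx, ufun, if_neg (not_lt.2 hxb)]
    ring
  refine ⟨hFc_ge, hPDEineq, hFc_eq, hPDEeq, ?_⟩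
  -- the HJB max equation
  rcases le_total (beta c) x with hbx | hxb
  · have h1 : lam * Ffun lam th mu sig Phi beta x c
        - (1 / 2 * sig ^ 2 * deriv (deriv (fun x' => Ffun lam th mu sig Phi beta x' c)) x
            + th * (mu - x) * deriv (fun x' => Ffun lam th mu sig Phi beta x' c) x)
        - lam * x * Phi c = 0 := by
      have := hPDEeq hbx
      linarith
    rw [max_eq_left ?_, h1]
    rw [h1]
    have := hFc_ge
    linarith
  · have h2 : -(derivWithin (fun c' => Ffun lam th mu sig Phi beta x c')
        (Set.Icc (0:ℝ) 1) c) - x = 0 := by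
      rw [hFc_eq hxb]; ring
    rw [max_eq_right ?_, h2]
    rw [h2]
    have := hPDEineq
    linarith
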